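/- Let 0 < β ≤ 1/2 and 0 ≤ α ≤ β/2, and let A = {a_1 < a_2 < ...} and B = {b_1 < b_2 < ...} be two infinite subsets of ℕ such that (1) a_i − b_i = o(a_i^{β−α}) as i → ∞; (2) A(n) − B(n) = O(n^{α}); and (3) there is a constant c > 0 with A(n) ≤ c·n^{β} and B(n) ≤ c·n^{β} for all n ∈ ℕ. Then, as the integer N → ∞, Σ_{n=0}^{∞} (1 − 1/N)^{2n} · ( Σ_{a ∈ A, a ≤ n} a − Σ_{b ∈ B, b ≤ n} b )^2 = o(N^{2+2β}). -/

import Mathlib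

open Filter Asymptotics

/-- The counting function `A(n) = |{a ∈ A : a ≤ n}|`. -/
noncomputable def countFn (A : Set ℕ) (n : ℕ) : ℕ := (A ∩ Set.Iic n).ncard

/-- `∑_{a ∈ A, a ≤ n} a`, as a real number. -/
noncomputable def sumFn (A : Set ℕ) (n : ℕ) : ℝ :=
  ∑ a ∈ Finset.range (n + 1), Set.indicator A (fun x => (x : ℝ)) a

open Classical in
lemma countFn_eq (A : Set ℕ) (n : ℕ) : countFn A n = Nat.count (· ∈ A) (n+1) := by
  rw [Nat.count_eq_card_filter_range, countFn, ← Set.ncard_coe_finset]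
  congr 1
  ext x
  simp [Nat.lt_succ_iff, and_comm]

lemma countFn_mono (A : Set ℕ) {m n : ℕ} (h : m ≤ n) : countFn A m ≤ countFn A n := by
  classical
  rw [countFn_eq, countFn_eq]
  exact Nat.count_monotone _ (by omega)

lemma nth_le_iff (A : Set ℕ) (hA : A.Infinite) (i m : ℕ) :
    Nat.nth (· ∈ A) i ≤ m ↔ i < countFn A m := by
  classical
  rw [countFn_eq, ← Nat.lt_succ_iff]
  exact (Nat.lt_nth_iff_count_lt (by simpa using hA)).symm

open Classical in
lemma countFn_succ (A : Set ℕ) (n : ℕ) :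
    (countFn A (n+1) : ℝ) = countFn A n + (if (n+1) ∈ A then 1 else 0) := by
  rw [countFn_eq, countFn_eq, Nat.count_succ]
  by_cases h : (n+1) ∈ A <;> simp [h]

open Classical in
lemma sumFn_identity (A : Set ℕ) (n : ℕ) :
    sumFn A n = n * countFn A n - ∑ m ∈ Finset.range n, (countFn A m : ℝ) := by
  induction n with
  | zero =>
      simp [sumFn, Set.indicator]
  | succ n ih =>
      rw [sumFn, Finset.sum_range_succ, ← sumFn, ih, Finset.sum_range_succ]
      rw [countFn_succ]
      push_cast
      rw [Set.indicator_apply]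
      by_cases h : (n+1) ∈ A <;> simp [h] <;> ring

open Classical in
lemma countFn_as_sum (A : Set ℕ) (hA : A.Infinite) (m K : ℕ) (hK : countFn A m ≤ K) :
    (countFn A m : ℝ) = ∑ i ∈ Finset.range K, (if Nat.nth (· ∈ A) i ≤ m then (1:ℝ) else 0) := by
  rw [Finset.sum_boole]
  congr 1
  have : Finset.filter (fun i => Nat.nth (· ∈ A) i ≤ m) (Finset.range K)
      = Finset.range (countFn A m) := by
    ext j
    simp only [Finset.mem_filter, Finset.mem_range, nth_le_iff A hA]
    omega
  rw [this, Finset.card_range]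

lemma ind_diff_sum_le (a b M : ℕ) :
    ∑ m ∈ Finset.range M, |(if a ≤ m then (1:ℝ) else 0) - (if b ≤ m then 1 else 0)|
      ≤ |(a:ℝ) - b| := by
  classical
  have step : ∀ m ∈ Finset.range M, |(if a ≤ m then (1:ℝ) else 0) - (if b ≤ m then 1 else 0)|
      ≤ (if m ∈ Finset.Ico (min a b) (max a b) then (1:ℝ) else 0) := by
    intro m _
    simp only [Finset.mem_Ico]
    split_ifs with h1 h2 h3 h3 h2 h3 h3 <;> simp_all <;> omega
  calc ∑ m ∈ Finset.range M, |(if a ≤ m then (1:ℝ) else 0) - (if b ≤ m then 1 else 0)|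
      ≤ ∑ m ∈ Finset.range M, (if m ∈ Finset.Ico (min a b) (max a b) then (1:ℝ) else 0) :=
        Finset.sum_le_sum step
    _ = ((Finset.range M).filter (· ∈ Finset.Ico (min a b) (max a b))).card := by
        rw [Finset.sum_boole]
    _ ≤ ((Finset.Ico (min a b) (max a b)).card : ℝ) := by
        have : ((Finset.range M).filter (· ∈ Finset.Ico (min a b) (max a b))) ⊆
            Finset.Ico (min a b) (max a b) := fun x hx => (Finset.mem_filter.mp hx).2
        exact_mod_cast Nat.cast_le.mpr (Finset.card_le_card this)
    _ ≤ |(a:ℝ) - b| := by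
        rw [Nat.card_Ico]
        rcases le_total a b with h | h
        · rw [max_eq_right h, min_eq_left h, Nat.cast_sub h, abs_sub_comm]
          exact le_abs_self _
        · rw [max_eq_left h, min_eq_right h, Nat.cast_sub h]
          exact le_abs_self _

lemma sum_abs_dC_le (A B : Set ℕ) (hA : A.Infinite) (hB : B.Infinite) (M : ℕ) :
    ∑ m ∈ Finset.range M, |(countFn A m : ℝ) - countFn B m|
      ≤ ∑ i ∈ Finset.range (max (countFn A M) (countFn B M)),
          |(Nat.nth (· ∈ A) i : ℝ) - (Nat.nth (· ∈ B) i : ℝ)| := by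
  set K := max (countFn A M) (countFn B M) with hK
  have step : ∀ m ∈ Finset.range M, |(countFn A m : ℝ) - countFn B m|
      ≤ ∑ i ∈ Finset.range K, |(if Nat.nth (· ∈ A) i ≤ m then (1:ℝ) else 0)
          - (if Nat.nth (· ∈ B) i ≤ m then (1:ℝ) else 0)| := by
    intro m hm
    have hm' : m ≤ M := le_of_lt (Finset.mem_range.mp hm)
    rw [countFn_as_sum A hA m K (le_trans (countFn_mono A hm') (le_max_left _ _)),
        countFn_as_sum B hB m K (le_trans (countFn_mono B hm') (le_max_right _ _)),
        ← Finset.sum_sub_distrib]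
    exact Finset.abs_sum_le_sum_abs _ _
  calc ∑ m ∈ Finset.range M, |(countFn A m : ℝ) - countFn B m|
      ≤ ∑ m ∈ Finset.range M, ∑ i ∈ Finset.range K,
          |(if Nat.nth (· ∈ A) i ≤ m then (1:ℝ) else 0)
            - (if Nat.nth (· ∈ B) i ≤ m then (1:ℝ) else 0)| := Finset.sum_le_sum step
    _ = ∑ i ∈ Finset.range K, ∑ m ∈ Finset.range M,
          |(if Nat.nth (· ∈ A) i ≤ m then (1:ℝ) else 0)
            - (if Nat.nth (· ∈ B) i ≤ m then (1:ℝ) else 0)| := Finset.sum_comm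
    _ ≤ ∑ i ∈ Finset.range K, |(Nat.nth (· ∈ A) i : ℝ) - (Nat.nth (· ∈ B) i : ℝ)| :=
        Finset.sum_le_sum (fun i _ => ind_diff_sum_le _ _ M)

lemma sum1 (β α : ℝ) (hβ0 : 0 < β) (hβ1 : β ≤ 1 / 2) (hα0 : 0 ≤ α) (hα1 : α ≤ β / 2)
    (A B : Set ℕ) (hA : A.Infinite) (hB : B.Infinite)
    (h1 : (fun i : ℕ => (Nat.nth (· ∈ A) i : ℝ) - (Nat.nth (· ∈ B) i : ℝ))
      =o[atTop] fun i : ℕ => (Nat.nth (· ∈ A) i : ℝ) ^ (β - α))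
    (c : ℝ) (hc : 0 < c) (h3 : ∀ n : ℕ,
      (countFn A n : ℝ) ≤ c * (n : ℝ) ^ β ∧ (countFn B n : ℝ) ≤ c * (n : ℝ) ^ β)
    (ε : ℝ) (hε : 0 < ε) :
    ∃ C₀ : ℝ, 0 ≤ C₀ ∧ ∀ M : ℕ,
      ∑ m ∈ Finset.range M, |(countFn A m : ℝ) - countFn B m|
        ≤ C₀ + ε * (M : ℝ) ^ (2*β - α) := by
  have hba0 : 0 < β - α := by linarith
  have hba1 : β - α ≤ 1 := by linarith
  have h2p : (0:ℝ) < 2 ^ (β - α) := Real.rpow_pos_of_pos (by norm_num) _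
  set ε₁ : ℝ := min (1/2) (ε / (c * 2 ^ (β - α))) with hε₁def
  have hε₁pos : 0 < ε₁ := lt_min (by norm_num) (div_pos hε (mul_pos hc h2p))
  have hev := (h1.def hε₁pos).exists_forall_of_atTop
  obtain ⟨I₀, hI₀⟩ := hev
  refine ⟨∑ i ∈ Finset.range I₀, |(Nat.nth (· ∈ A) i : ℝ) - (Nat.nth (· ∈ B) i : ℝ)|,
    Finset.sum_nonneg (fun i _ => abs_nonneg _), ?_⟩
  intro M
  set C₀ := ∑ i ∈ Finset.range I₀, |(Nat.nth (· ∈ A) i : ℝ) - (Nat.nth (· ∈ B) i : ℝ)| with hC₀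
  have hC₀0 : 0 ≤ C₀ := Finset.sum_nonneg (fun i _ => abs_nonneg _)
  have hrpow0 : 0 ≤ ε * (M : ℝ) ^ (2*β - α) :=
    mul_nonneg hε.le (Real.rpow_nonneg (Nat.cast_nonneg _) _)
  rcases Nat.eq_zero_or_pos M with hM0 | hM1
  · subst hM0; simpa using by positivity
  -- M ≥ 1
  have hM1R : (1:ℝ) ≤ (M:ℝ) := by exact_mod_cast hM1
  set K := max (countFn A M) (countFn B M) with hKdef
  have key : ∀ i, I₀ ≤ i → i < K →
      |(Nat.nth (· ∈ A) i : ℝ) - (Nat.nth (· ∈ B) i : ℝ)| ≤ ε₁ * (2 * (M:ℝ)) ^ (β - α) := by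
    intro i hi hiK
    set a : ℕ := Nat.nth (· ∈ A) i with ha
    set b : ℕ := Nat.nth (· ∈ B) i with hb
    have hsm := hI₀ i hi
    simp only [Real.norm_eq_abs] at hsm
    have hgabs : |(a:ℝ) ^ (β - α)| = (a:ℝ) ^ (β - α) :=
      abs_of_nonneg (Real.rpow_nonneg (Nat.cast_nonneg _) _)
    rw [hgabs] at hsm
    -- a ≤ 2 M (as reals)
    have haM : (a : ℝ) ≤ 2 * M := by
      rcases lt_max_iff.mp (hKdef ▸ hiK) with h | h
      · have : a ≤ M := (nth_le_iff A hA i M).mpr h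
        have := (Nat.cast_le (α := ℝ)).mpr this
        linarith
      · have hbM : b ≤ M := (nth_le_iff B hB i M).mpr h
        have hbMR : (b:ℝ) ≤ M := by exact_mod_cast hbM
        rcases le_or_gt ((a:ℝ)) 1 with h1a | h1a
        · linarith
        · have hpa : (a:ℝ) ^ (β - α) ≤ (a:ℝ) ^ (1:ℝ) :=
            Real.rpow_le_rpow_of_exponent_le h1a.le hba1
          rw [Real.rpow_one] at hpa
          have hhalf : |(a:ℝ) - b| ≤ (1/2) * (a:ℝ) := by
            calc |(a:ℝ) - b| ≤ ε₁ * (a:ℝ) ^ (β - α) := hsm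
              _ ≤ (1/2) * (a:ℝ) ^ (β - α) := by
                  apply mul_le_mul_of_nonneg_right (min_le_left _ _)
                  exact Real.rpow_nonneg (Nat.cast_nonneg _) _
              _ ≤ (1/2) * (a:ℝ) := by linarith
          have := abs_le.mp hhalf
          linarith
    calc |(a:ℝ) - b| ≤ ε₁ * (a:ℝ) ^ (β - α) := hsm
      _ ≤ ε₁ * (2 * (M:ℝ)) ^ (β - α) := by
          apply mul_le_mul_of_nonneg_left _ hε₁pos.le
          exact Real.rpow_le_rpow (Nat.cast_nonneg _) haM hba0.le
  have hKc : (K : ℝ) ≤ c * (M:ℝ) ^ β := by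
    rcases max_choice (countFn A M) (countFn B M) with h | h <;>
      rw [hKdef, h] <;> [exact (h3 M).1; exact (h3 M).2]
  calc ∑ m ∈ Finset.range M, |(countFn A m : ℝ) - countFn B m|
      ≤ ∑ i ∈ Finset.range K, |(Nat.nth (· ∈ A) i : ℝ) - (Nat.nth (· ∈ B) i : ℝ)| :=
        sum_abs_dC_le A B hA hB M
    _ ≤ C₀ + (K:ℝ) * (ε₁ * (2 * (M:ℝ)) ^ (β - α)) := by
        rcases le_or_gt K I₀ with h | h
        · have : ∑ i ∈ Finset.range K, |(Nat.nth (· ∈ A) i : ℝ) - (Nat.nth (· ∈ B) i : ℝ)| ≤ C₀ :=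
            Finset.sum_le_sum_of_subset_of_nonneg
              (Finset.range_subset_range.mpr h) (fun i _ _ => abs_nonneg _)
          exact this.trans (le_add_of_nonneg_right (by positivity))
        · have hsplit : Finset.range K = Finset.range I₀ ∪ Finset.Ico I₀ K := by
            simp only [Finset.range_eq_Ico]
            exact (Finset.Ico_union_Ico_eq_Ico (Nat.zero_le I₀) h.le).symm
          rw [hsplit, Finset.sum_union]
          · gcongr
            · calc ∑ i ∈ Finset.Ico I₀ K, |(Nat.nth (· ∈ A) i : ℝ) - (Nat.nth (· ∈ B) i : ℝ)|
                  ≤ ∑ _i ∈ Finset.Ico I₀ K, ε₁ * (2 * (M:ℝ)) ^ (β - α) := by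
                    apply Finset.sum_le_sum
                    intro i hi
                    obtain ⟨h1i, h2i⟩ := Finset.mem_Ico.mp hi
                    exact key i h1i h2i
                _ ≤ (K:ℝ) * (ε₁ * (2 * (M:ℝ)) ^ (β - α)) := by
                    rw [Finset.sum_const, nsmul_eq_mul, Nat.card_Ico]
                    apply mul_le_mul_of_nonneg_right _ (by positivity)
                    exact Nat.cast_le.mpr (Nat.sub_le K I₀)
          · rw [Finset.range_eq_Ico]; exact Finset.Ico_disjoint_Ico_consecutive 0 I₀ K
    _ ≤ C₀ + ε * (M : ℝ) ^ (2*β - α) := by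
        have expand : (2 * (M:ℝ)) ^ (β - α) = 2 ^ (β - α) * (M:ℝ) ^ (β - α) :=
          Real.mul_rpow (by norm_num) (Nat.cast_nonneg _)
        have hMsplit : (M:ℝ) ^ β * (M:ℝ) ^ (β - α) = (M:ℝ) ^ (2*β - α) := by
          rw [← Real.rpow_add (by linarith : (0:ℝ) < (M:ℝ))]
          ring_nf
        have hε₁le : ε₁ ≤ ε / (c * 2 ^ (β - α)) := min_le_right _ _
        have h1 : (K:ℝ) * (ε₁ * (2 * (M:ℝ)) ^ (β - α))
            ≤ (c * (M:ℝ) ^ β) * (ε₁ * (2 ^ (β - α) * (M:ℝ) ^ (β - α))) := by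
          rw [expand]
          apply mul_le_mul_of_nonneg_right hKc
          positivity
        have h2 : (c * (M:ℝ) ^ β) * (ε₁ * (2 ^ (β - α) * (M:ℝ) ^ (β - α)))
            ≤ ε * (M : ℝ) ^ (2*β - α) := by
          rw [← hMsplit]
          calc (c * (M:ℝ) ^ β) * (ε₁ * (2 ^ (β - α) * (M:ℝ) ^ (β - α)))
              = ε₁ * ((c * 2 ^ (β - α)) * ((M:ℝ) ^ β * (M:ℝ) ^ (β - α))) := by ring
            _ ≤ (ε / (c * 2 ^ (β - α))) * ((c * 2 ^ (β - α)) * ((M:ℝ) ^ β * (M:ℝ) ^ (β - α))) := by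
                apply mul_le_mul_of_nonneg_right hε₁le
                positivity
            _ = ε * ((M:ℝ) ^ β * (M:ℝ) ^ (β - α)) := by
                field_simp
        linarith

lemma eventually_to_const {f g : ℕ → ℝ} (h : ∀ᶠ M in atTop, f M ≤ g M) (hg : ∀ M, 0 ≤ g M) :
    ∃ C, 0 ≤ C ∧ ∀ M, f M ≤ C + g M := by
  obtain ⟨M₀, hM₀⟩ := eventually_atTop.mp h
  refine ⟨∑ m ∈ Finset.range M₀, |f m|, Finset.sum_nonneg (fun m _ => abs_nonneg _), ?_⟩
  intro M
  rcases lt_or_ge M M₀ with hM | hM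
  · have h1 : f M ≤ |f M| := le_abs_self _
    have h2 : |f M| ≤ ∑ m ∈ Finset.range M₀, |f m| :=
      Finset.single_le_sum (fun m _ => abs_nonneg (f m)) (Finset.mem_range.mpr hM)
    linarith [hg M]
  · have h0 : (0:ℝ) ≤ ∑ m ∈ Finset.range M₀, |f m| :=
      Finset.sum_nonneg (fun m _ => abs_nonneg _)
    linarith [hM₀ M hM]

lemma nat_rpow_tendsto (s : ℝ) (hs : 0 < s) :
    Tendsto (fun M : ℕ => (M:ℝ) ^ s) atTop atTop :=
  (tendsto_rpow_atTop hs).comp tendsto_natCast_atTop_atTop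

lemma sum2 (β α : ℝ) (hβ0 : 0 < β) (hα0 : 0 ≤ α) (hα1 : α ≤ β / 2) (dC : ℕ → ℝ)
    (h2 : dC =O[atTop] fun n : ℕ => (n:ℝ) ^ α)
    (hs1 : ∀ ε : ℝ, 0 < ε → ∃ C₀, 0 ≤ C₀ ∧ ∀ M : ℕ,
      ∑ m ∈ Finset.range M, |dC m| ≤ C₀ + ε * (M:ℝ) ^ (2*β - α))
    (ε : ℝ) (hε : 0 < ε) :
    ∃ C₁, 0 ≤ C₁ ∧ ∀ M : ℕ, ∑ m ∈ Finset.range M, (dC m)^2 ≤ C₁ + ε * (M:ℝ) ^ (2*β) := by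
  have hba : 0 < 2*β - α := by linarith
  obtain ⟨C₂, hC₂, hOW⟩ := h2.exists_pos
  obtain ⟨m₀, hm₀⟩ := eventually_atTop.mp hOW.bound
  obtain ⟨C₀, hC₀0, hS1⟩ := hs1 (ε / (2 * C₂)) (by positivity)
  set Cs : ℝ := ∑ m ∈ Finset.range m₀, (dC m)^2 with hCs
  have hCs0 : 0 ≤ Cs := Finset.sum_nonneg (fun m _ => sq_nonneg _)
  apply eventually_to_const _ (fun M => by positivity)
  have ev1 : ∀ᶠ M : ℕ in atTop, 4 * Cs / ε ≤ (M:ℝ) ^ (2*β) :=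
    (nat_rpow_tendsto _ (by linarith)).eventually_ge_atTop _
  have ev2 : ∀ᶠ M : ℕ in atTop, 4 * C₂ * C₀ / ε ≤ (M:ℝ) ^ (2*β - α) :=
    (nat_rpow_tendsto _ hba).eventually_ge_atTop _
  filter_upwards [ev1, ev2, eventually_ge_atTop m₀, eventually_ge_atTop 1]
    with M hev1 hev2 hMm₀ hM1
  have hM1R : (1:ℝ) ≤ (M:ℝ) := by exact_mod_cast hM1
  have hMpos : (0:ℝ) < (M:ℝ) := by linarith
  have hsplitM : (M:ℝ) ^ α * (M:ℝ) ^ (2*β - α) = (M:ℝ) ^ (2*β) := by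
    rw [← Real.rpow_add hMpos]; ring_nf
  have hsplit : Finset.range M = Finset.range m₀ ∪ Finset.Ico m₀ M := by
    simp only [Finset.range_eq_Ico]
    exact (Finset.Ico_union_Ico_eq_Ico (Nat.zero_le m₀) hMm₀).symm
  have hpt : ∀ m ∈ Finset.Ico m₀ M, (dC m)^2 ≤ C₂ * (M:ℝ)^α * |dC m| := by
    intro m hm
    obtain ⟨h1m, h2m⟩ := Finset.mem_Ico.mp hm
    have hb := hm₀ m h1m
    simp only [Real.norm_eq_abs] at hb
    rw [abs_of_nonneg (Real.rpow_nonneg (Nat.cast_nonneg _) _)] at hb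
    have hmM : (m:ℝ) ^ α ≤ (M:ℝ) ^ α :=
      Real.rpow_le_rpow (Nat.cast_nonneg _) (by exact_mod_cast h2m.le) hα0
    calc (dC m)^2 = |dC m| * |dC m| := by rw [← abs_mul, ← sq, abs_of_nonneg (sq_nonneg _)]
      _ ≤ (C₂ * (m:ℝ)^α) * |dC m| := mul_le_mul_of_nonneg_right hb (abs_nonneg _)
      _ ≤ C₂ * (M:ℝ)^α * |dC m| := by
          apply mul_le_mul_of_nonneg_right _ (abs_nonneg _)
          exact mul_le_mul_of_nonneg_left hmM hC₂.le
  calc ∑ m ∈ Finset.range M, (dC m)^2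
      = Cs + ∑ m ∈ Finset.Ico m₀ M, (dC m)^2 := by
        rw [hsplit, Finset.sum_union
          (by rw [Finset.range_eq_Ico]; exact Finset.Ico_disjoint_Ico_consecutive 0 m₀ M)]
    _ ≤ Cs + ∑ m ∈ Finset.Ico m₀ M, C₂ * (M:ℝ)^α * |dC m| := by
        gcongr with m hm
        exact hpt m hm
    _ = Cs + C₂ * (M:ℝ)^α * ∑ m ∈ Finset.Ico m₀ M, |dC m| := by rw [Finset.mul_sum]
    _ ≤ Cs + C₂ * (M:ℝ)^α * ∑ m ∈ Finset.range M, |dC m| := by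
        have hsub : ∑ m ∈ Finset.Ico m₀ M, |dC m| ≤ ∑ m ∈ Finset.range M, |dC m| :=
          Finset.sum_le_sum_of_subset_of_nonneg
            (by rw [Finset.range_eq_Ico]; exact Finset.Ico_subset_Ico (Nat.zero_le _) le_rfl)
            (fun i _ _ => abs_nonneg _)
        have := mul_le_mul_of_nonneg_left hsub
          (by positivity : (0:ℝ) ≤ C₂ * (M:ℝ)^α)
        linarith
    _ ≤ Cs + C₂ * (M:ℝ)^α * (C₀ + (ε / (2 * C₂)) * (M:ℝ) ^ (2*β - α)) := by
        have := mul_le_mul_of_nonneg_left (hS1 M)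
          (by positivity : (0:ℝ) ≤ C₂ * (M:ℝ)^α)
        linarith
    _ ≤ ε * (M:ℝ) ^ (2*β) := by
        have e1 : C₂ * (M:ℝ)^α * ((ε / (2 * C₂)) * (M:ℝ) ^ (2*β - α)) = (ε/2) * (M:ℝ)^(2*β) := by
          rw [← hsplitM]; field_simp
        have e2 : Cs ≤ (ε/4) * (M:ℝ)^(2*β) := by
          have := (div_le_iff₀ hε).mp hev1
          linarith
        have e3 : C₂ * (M:ℝ)^α * C₀ ≤ (ε/4) * (M:ℝ)^(2*β) := by
          have : C₂ * C₀ ≤ (ε/4) * (M:ℝ)^(2*β-α) := by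
            have := (div_le_iff₀ hε).mp hev2
            linarith
          calc C₂ * (M:ℝ)^α * C₀ = (M:ℝ)^α * (C₂ * C₀) := by ring
            _ ≤ (M:ℝ)^α * ((ε/4) * (M:ℝ)^(2*β-α)) := by
                apply mul_le_mul_of_nonneg_left this (Real.rpow_nonneg (Nat.cast_nonneg _) _)
            _ = (ε/4) * (M:ℝ)^(2*β) := by rw [← hsplitM]; ring
        nlinarith [Real.rpow_nonneg (Nat.cast_nonneg M : (0:ℝ) ≤ M) (2*β)]

section geo
variable {N : ℕ} (hN : 2 ≤ N)

lemma r_nonneg (hN : 2 ≤ N) : (0:ℝ) ≤ 1 - 1/(N:ℝ) := by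
  have : (2:ℝ) ≤ (N:ℝ) := by exact_mod_cast hN
  have hN0 : (0:ℝ) < (N:ℝ) := by linarith
  have : 1/(N:ℝ) ≤ 1/2 := by
    rw [div_le_div_iff₀ hN0 (by norm_num)]; linarith
  linarith

lemma r_half (hN : 2 ≤ N) : (1:ℝ)/2 ≤ 1 - 1/(N:ℝ) := by
  have : (2:ℝ) ≤ (N:ℝ) := by exact_mod_cast hN
  have hN0 : (0:ℝ) < (N:ℝ) := by linarith
  have : 1/(N:ℝ) ≤ 1/2 := by
    rw [div_le_div_iff₀ hN0 (by norm_num)]; linarith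
  linarith

lemma r_lt_one (hN : 2 ≤ N) : 1 - 1/(N:ℝ) < 1 := by
  have : (2:ℝ) ≤ (N:ℝ) := by exact_mod_cast hN
  have hN0 : (0:ℝ) < (N:ℝ) := by linarith
  have : 0 < 1/(N:ℝ) := by positivity
  linarith

lemma rpow_mul_exp_le {s x : ℝ} (hs : 0 < s) (hx : 0 ≤ x) {N : ℕ} (hN : 2 ≤ N) :
    x ^ s ≤ (s * N) ^ s * Real.exp (x / N) := by
  have hN0 : (0:ℝ) < (N:ℝ) := by
    have : (2:ℝ) ≤ (N:ℝ) := by exact_mod_cast hN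
    linarith
  have hsN : (0:ℝ) < s * N := mul_pos hs hN0
  have key : x ≤ (s * N) * Real.exp (x / (s * N)) := by
    have ht : x / (s * N) ≤ Real.exp (x / (s * N)) := by
      have := Real.add_one_le_exp (x / (s * N))
      linarith
    calc x = (s * N) * (x / (s * N)) := by field_simp
      _ ≤ (s * N) * Real.exp (x / (s * N)) := by
          exact mul_le_mul_of_nonneg_left ht hsN.le
  calc x ^ s ≤ ((s * N) * Real.exp (x / (s * N))) ^ s :=
        Real.rpow_le_rpow hx key hs.le
    _ = (s * N) ^ s * (Real.exp (x / (s * N))) ^ s :=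
        Real.mul_rpow hsN.le (Real.exp_nonneg _)
    _ = (s * N) ^ s * Real.exp (x / N) := by
        rw [← Real.exp_mul]
        congr 1
        field_simp
    
lemma pow_le_exp_r {N : ℕ} (hN : 2 ≤ N) (n : ℕ) :
    (1 - 1/(N:ℝ))^n ≤ Real.exp (-(n:ℝ)/N) := by
  have h1 : 1 - 1/(N:ℝ) ≤ Real.exp (-(1:ℝ)/N) := by
    have := Real.add_one_le_exp (-(1:ℝ)/N)
    rw [neg_div]
    rw [neg_div] at this
    linarith
  calc (1 - 1/(N:ℝ))^n ≤ (Real.exp (-(1:ℝ)/N))^n :=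
        pow_le_pow_left₀ (r_nonneg hN) h1 n
    _ = Real.exp (-(n:ℝ)/N) := by
        rw [← Real.exp_nat_mul]
        congr 1
        field_simp
    
lemma geo_pt {N : ℕ} (hN : 2 ≤ N) {s : ℝ} (hs : 0 < s) (n : ℕ) :
    ((n:ℝ)+1) ^ s * (1 - 1/(N:ℝ))^(2*n) ≤ 2 * (s * N) ^ s * (1 - 1/(N:ℝ))^n := by
  obtain ⟨r, hr⟩ : ∃ r : ℝ, r = 1 - 1/(N:ℝ) := ⟨_, rfl⟩
  rw [← hr]
  have hrh : (1:ℝ)/2 ≤ r := hr ▸ r_half hN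
  have hr0 : (0:ℝ) ≤ r := by linarith
  have hr1 : r ≤ 1 := hr ▸ (r_lt_one hN).le
  have hre : ∀ m : ℕ, r ^ m ≤ Real.exp (-(m:ℝ)/N) := fun m => hr ▸ pow_le_exp_r hN m
  have hrpow : r ^ (2*n) = r^n * r^n := by rw [two_mul, pow_add]
  have hrn1 : r ^ n ≤ 2 * r^(n+1) := by
    rw [pow_succ]
    nlinarith [mul_nonneg (pow_nonneg hr0 n) (by linarith : (0:ℝ) ≤ 2*r - 1)]
  have hexp : ((n:ℝ)+1) ^ s * r^(n+1) ≤ (s*N)^s := by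
    have h1 : r^(n+1) ≤ Real.exp (-((n:ℝ)+1)/N) := by
      have := hre (n+1)
      push_cast at this
      exact this
    have h2 := rpow_mul_exp_le hs (by positivity : (0:ℝ) ≤ (n:ℝ)+1) hN
    have hP : (0:ℝ) ≤ ((n:ℝ)+1)^s := Real.rpow_nonneg (by positivity) _
    calc ((n:ℝ)+1) ^ s * r^(n+1) ≤ ((n:ℝ)+1) ^ s * Real.exp (-((n:ℝ)+1)/N) :=
          mul_le_mul_of_nonneg_left h1 hP
      _ ≤ ((s*N)^s * Real.exp (((n:ℝ)+1)/N)) * Real.exp (-((n:ℝ)+1)/N) :=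
          mul_le_mul_of_nonneg_right h2 (Real.exp_nonneg _)
      _ = (s*N)^s := by
          rw [mul_assoc, ← Real.exp_add,
            show ((n:ℝ)+1)/(N:ℝ) + -((n:ℝ)+1)/(N:ℝ) = 0 by ring]
          simp
  calc ((n:ℝ)+1) ^ s * r^(2*n) = (((n:ℝ)+1) ^ s * r^n) * r^n := by rw [hrpow]; ring
    _ ≤ (((n:ℝ)+1) ^ s * (2 * r^(n+1))) * r^n := by
        apply mul_le_mul_of_nonneg_right _ (pow_nonneg hr0 n)
        exact mul_le_mul_of_nonneg_left hrn1 (Real.rpow_nonneg (by positivity) _)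
    _ = 2 * (((n:ℝ)+1) ^ s * r^(n+1)) * r^n := by ring
    _ ≤ 2 * (s*N)^s * r^n := by
        apply mul_le_mul_of_nonneg_right _ (pow_nonneg hr0 n)
        linarith

lemma geo_sum_r {N : ℕ} (hN : 2 ≤ N) (M : ℕ) :
    ∑ n ∈ Finset.range M, (1 - 1/(N:ℝ))^n ≤ (N:ℝ) := by
  have hr0 := r_nonneg hN
  have hr1 := r_lt_one hN
  have hN0 : (0:ℝ) < (N:ℝ) := by
    have : (2:ℝ) ≤ (N:ℝ) := by exact_mod_cast hN
    linarith
  calc ∑ n ∈ Finset.range M, (1 - 1/(N:ℝ))^n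
      ≤ ∑' n : ℕ, (1 - 1/(N:ℝ))^n :=
        Summable.sum_le_tsum _ (fun i _ => pow_nonneg hr0 i) (summable_geometric_of_lt_one hr0 hr1)
    _ = (1 - (1 - 1/(N:ℝ)))⁻¹ := tsum_geometric_of_lt_one hr0 hr1
    _ = (N:ℝ) := by
        rw [show 1 - (1 - 1/(N:ℝ)) = 1/(N:ℝ) by ring, one_div, inv_inv]

lemma geo_sum (hN : 2 ≤ N) {s : ℝ} (hs : 0 < s) (M : ℕ) :
    ∑ n ∈ Finset.range M, ((n:ℝ)+1) ^ s * (1 - 1/(N:ℝ))^(2*n)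
      ≤ 2 * (s * N) ^ s * N := by
  calc ∑ n ∈ Finset.range M, ((n:ℝ)+1) ^ s * (1 - 1/(N:ℝ))^(2*n)
      ≤ ∑ n ∈ Finset.range M, 2 * (s * N) ^ s * (1 - 1/(N:ℝ))^n :=
        Finset.sum_le_sum (fun n _ => geo_pt hN hs n)
    _ = 2 * (s * N) ^ s * ∑ n ∈ Finset.range M, (1 - 1/(N:ℝ))^n := by
        rw [Finset.mul_sum]
    _ ≤ 2 * (s * N) ^ s * N := by
        apply mul_le_mul_of_nonneg_left (geo_sum_r hN M)
        positivity

lemma geo_sum_const (hN : 2 ≤ N) (M : ℕ) :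
    ∑ n ∈ Finset.range M, (1 - 1/(N:ℝ))^(2*n) ≤ (N:ℝ) := by
  refine le_trans (Finset.sum_le_sum (fun n _ => ?_)) (geo_sum_r hN M)
  rw [two_mul, pow_add]
  have hr0 := r_nonneg hN
  have hr1 := (r_lt_one hN).le
  nlinarith [pow_nonneg hr0 n, pow_le_one₀ hr0 hr1 (n := n)]
end geo

lemma abel_sum (w q : ℕ → ℝ) (M : ℕ) :
    ∑ n ∈ Finset.range (M+1), w n * q n
      = ∑ n ∈ Finset.range M, (w n - w (n+1)) * (∑ m ∈ Finset.range (n+1), q m)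
        + w M * (∑ m ∈ Finset.range (M+1), q m) := by
  induction M with
  | zero => simp
  | succ M ih =>
      rw [Finset.sum_range_succ (f := fun n => w n * q n), ih,
        Finset.sum_range_succ (f := fun n => (w n - w (n+1)) * (∑ m ∈ Finset.range (n+1), q m)),
        Finset.sum_range_succ (f := fun m => q m) (n := M+1)]
      ring

set_option maxHeartbeats 1000000 in
lemma weighted_sum_bound (β' : ℝ) (hb : 0 < β') (q : ℕ → ℝ) (hq : ∀ n, 0 ≤ q n)
    (C₁ ε₂ : ℝ) (hC₁ : 0 ≤ C₁) (hε₂ : 0 ≤ ε₂)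
    (hQ : ∀ n : ℕ, ∑ m ∈ Finset.range n, q m ≤ C₁ + ε₂ * (n:ℝ) ^ β')
    (N : ℕ) (hN : 2 ≤ N) (M : ℕ) :
    ∑ n ∈ Finset.range M, (n:ℝ)^2 * (1 - 1/(N:ℝ))^(2*n) * q n
      ≤ 72*C₁*(N:ℝ)^2
        + ε₂ * (12*(2+β')^(2+β') + 48*β'^β') * (N:ℝ)^(2+β') := by
  have hν2 : (2:ℝ) ≤ (N:ℝ) := by exact_mod_cast hN
  have hν0 : (0:ℝ) < (N:ℝ) := by linarith
  set ν : ℝ := (N:ℝ) with hνdef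
  obtain ⟨r, hr⟩ : ∃ r : ℝ, r = 1 - 1/ν := ⟨_, rfl⟩
  rw [← hr]
  have hrh : (1:ℝ)/2 ≤ r := hr ▸ r_half hN
  have hr0 : (0:ℝ) ≤ r := by linarith
  have hr1 : r ≤ 1 := hr ▸ (r_lt_one hN).le
  -- the weight
  set w : ℕ → ℝ := fun n => ((n:ℝ) + 2*ν)^2 * r^(2*n) with hwdef
  have hw0 : ∀ n, 0 ≤ w n := fun n => by
    apply mul_nonneg (sq_nonneg _) (pow_nonneg hr0 _)
  have hwmono : ∀ n, w (n+1) ≤ w n := by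
    intro n
    have h1 : r * ((n:ℝ)+1+2*ν) ≤ (n:ℝ)+2*ν := by
      rw [hr]
      have : ((n:ℝ)+1+2*ν)/ν ≥ 2 := by
        rw [ge_iff_le, le_div_iff₀ hν0]
        nlinarith
      have hfrac : (1 - 1/ν) * ((n:ℝ)+1+2*ν) = ((n:ℝ)+1+2*ν) - ((n:ℝ)+1+2*ν)/ν := by
        field_simp
      rw [hfrac]
      linarith
    have h2 : (0:ℝ) ≤ r * ((n:ℝ)+1+2*ν) := by positivity
    have hsq : (r * ((n:ℝ)+1+2*ν))^2 ≤ ((n:ℝ)+2*ν)^2 := by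
      apply sq_le_sq' _ h1
      nlinarith
    calc w (n+1) = (r * ((n:ℝ)+1+2*ν))^2 * r^(2*n) := by
          rw [hwdef]
          push_cast
          rw [show 2*(n+1) = 2*n + 2 by ring, pow_add]
          ring
      _ ≤ ((n:ℝ)+2*ν)^2 * r^(2*n) :=
          mul_le_mul_of_nonneg_right hsq (pow_nonneg hr0 _)
      _ = w n := rfl
  have hwdiff : ∀ n, w n - w (n+1) ≤ (2/ν) * (r^(2*n) * (2*((n:ℝ)+1)^2 + 8*ν^2)) := by
    intro n
    have e1 : w (n+1) ≥ r^2 * (((n:ℝ)+2*ν)^2 * r^(2*n)) := by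
      have : w (n+1) = (((n:ℝ)+1)+2*ν)^2 * (r^(2*n) * r^2) := by
        rw [hwdef]
        push_cast
        rw [show 2*(n+1) = 2*n + 2 by ring, pow_add]
      rw [this]
      have hx0 : (0:ℝ) ≤ (n:ℝ)+2*ν := by positivity
      have h1 : ((n:ℝ)+2*ν)^2 ≤ (((n:ℝ)+1)+2*ν)^2 :=
        pow_le_pow_left₀ hx0 (by linarith) 2
      have h2 : (0:ℝ) ≤ r^(2*n) * r^2 := by positivity
      calc r^2 * (((n:ℝ)+2*ν)^2 * r^(2*n)) = ((n:ℝ)+2*ν)^2 * (r^(2*n) * r^2) := by ring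
        _ ≤ (((n:ℝ)+1)+2*ν)^2 * (r^(2*n) * r^2) := mul_le_mul_of_nonneg_right h1 h2
    have e3 : 1 - r^2 ≤ 2/ν := by
      rw [hr]
      have h := sq_nonneg (1/ν)
      have expand : 1 - (1 - 1/ν)^2 = 2*(1/ν) - (1/ν)^2 := by ring
      have : (2:ℝ)*(1/ν) = 2/ν := by ring
      linarith
    have e4 : ((n:ℝ)+2*ν)^2 ≤ 2*((n:ℝ)+1)^2 + 8*ν^2 := by nlinarith [sq_nonneg ((n:ℝ) - 2*ν + 1)]
    have e5 : (0:ℝ) ≤ ((n:ℝ)+2*ν)^2 * r^(2*n) := by positivity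
    have e6 : (0:ℝ) ≤ 1 - r^2 := by nlinarith
    have hwn : w n = ((n:ℝ)+2*ν)^2 * r^(2*n) := rfl
    calc w n - w (n+1)
        ≤ ((n:ℝ)+2*ν)^2 * r^(2*n) - r^2 * (((n:ℝ)+2*ν)^2 * r^(2*n)) := by linarith [e1]
      _ = (1 - r^2) * (((n:ℝ)+2*ν)^2 * r^(2*n)) := by ring
      _ ≤ (2/ν) * (((n:ℝ)+2*ν)^2 * r^(2*n)) := mul_le_mul_of_nonneg_right e3 e5
      _ ≤ (2/ν) * ((2*((n:ℝ)+1)^2 + 8*ν^2) * r^(2*n)) := by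
          apply mul_le_mul_of_nonneg_left _ (by positivity : (0:ℝ) ≤ 2/ν)
          exact mul_le_mul_of_nonneg_right e4 (pow_nonneg hr0 (2*n))
      _ = (2/ν) * (r^(2*n) * (2*((n:ℝ)+1)^2 + 8*ν^2)) := by ring
  -- cast version of hQ
  have hQ' : ∀ n : ℕ, ∑ m ∈ Finset.range (n+1), q m ≤ C₁ + ε₂ * ((n:ℝ)+1) ^ β' := by
    intro n
    have := hQ (n+1)
    push_cast at this
    exact this
  have hQpos : ∀ x : ℝ, 0 ≤ x → 0 ≤ C₁ + ε₂ * x ^ β' := by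
    intro x hx
    have := Real.rpow_nonneg hx β'
    positivity
  -- rpow/pow conversions
  have hpow2 : ∀ x : ℝ, 0 ≤ x → x ^ ((2:ℝ)) = x^(2:ℕ) := by
    intro x hx
    rw [show (2:ℝ) = ((2:ℕ):ℝ) by norm_num, Real.rpow_natCast]
  have hsplitn : ∀ x : ℝ, 0 < x → x^(2:ℕ) * x ^ β' = x ^ ((2:ℝ)+β') := by
    intro x hx
    rw [Real.rpow_add hx, hpow2 x hx.le]
  have hb2 : (0:ℝ) < 2 + β' := by linarith
  -- the four basic sums
  have hS2 : ∑ n ∈ Finset.range M, ((n:ℝ)+1) ^ ((2:ℝ)) * r^(2*n) ≤ 2*((2:ℝ)*ν)^((2:ℝ))*ν := by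
    have := geo_sum hN (by norm_num : (0:ℝ) < 2) M
    rw [hr]; exact this
  have hS0 : ∑ n ∈ Finset.range M, r^(2*n) ≤ ν := by
    have := geo_sum_const hN (M := M)
    rw [hr]; exact this
  have hS2b : ∑ n ∈ Finset.range M, ((n:ℝ)+1) ^ ((2:ℝ)+β') * r^(2*n)
      ≤ 2*(((2:ℝ)+β')*ν)^((2:ℝ)+β')*ν := by
    have := geo_sum hN hb2 M
    rw [hr]; exact this
  have hSb : ∑ n ∈ Finset.range M, ((n:ℝ)+1) ^ β' * r^(2*n) ≤ 2*(β'*ν)^β'*ν := by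
    have := geo_sum hN hb M
    rw [hr]; exact this
  -- pointwise versions for the boundary term
  have hrM1 : r^M ≤ 1 := pow_le_one₀ hr0 hr1
  have hrM0 : (0:ℝ) ≤ r^M := pow_nonneg hr0 M
  have hP2 : ((M:ℝ)+1) ^ ((2:ℝ)) * r^(2*M) ≤ 2*((2:ℝ)*ν)^((2:ℝ)) := by
    have h := geo_pt hN (by norm_num : (0:ℝ) < 2) M
    rw [hr]
    calc ((M:ℝ)+1) ^ ((2:ℝ)) * (1-1/ν)^(2*M) ≤ 2*((2:ℝ)*ν)^((2:ℝ)) * (1-1/ν)^M := h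
      _ ≤ 2*((2:ℝ)*ν)^((2:ℝ)) * 1 := by
          apply mul_le_mul_of_nonneg_left (hr ▸ hrM1)
          positivity
      _ = 2*((2:ℝ)*ν)^((2:ℝ)) := by ring
  have hP0 : r^(2*M) ≤ 1 := pow_le_one₀ hr0 hr1
  have hP2b : ((M:ℝ)+1) ^ ((2:ℝ)+β') * r^(2*M) ≤ 2*(((2:ℝ)+β')*ν)^((2:ℝ)+β') := by
    have h := geo_pt hN hb2 M
    rw [hr]
    calc ((M:ℝ)+1) ^ ((2:ℝ)+β') * (1-1/ν)^(2*M)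
        ≤ 2*(((2:ℝ)+β')*ν)^((2:ℝ)+β') * (1-1/ν)^M := h
      _ ≤ 2*(((2:ℝ)+β')*ν)^((2:ℝ)+β') * 1 := by
          apply mul_le_mul_of_nonneg_left (hr ▸ hrM1)
          positivity
      _ = 2*(((2:ℝ)+β')*ν)^((2:ℝ)+β') := by ring
  have hPb : ((M:ℝ)+1) ^ β' * r^(2*M) ≤ 2*(β'*ν)^β' := by
    have h := geo_pt hN hb M
    rw [hr]
    calc ((M:ℝ)+1) ^ β' * (1-1/ν)^(2*M) ≤ 2*(β'*ν)^β' * (1-1/ν)^M := h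
      _ ≤ 2*(β'*ν)^β' * 1 := by
          apply mul_le_mul_of_nonneg_left (hr ▸ hrM1)
          positivity
      _ = 2*(β'*ν)^β' := by ring
  -- main chain
  have step1 : ∑ n ∈ Finset.range M, (n:ℝ)^2 * r^(2*n) * q n
      ≤ ∑ n ∈ Finset.range M, w n * q n := by
    apply Finset.sum_le_sum
    intro n _
    apply mul_le_mul_of_nonneg_right _ (hq n)
    apply mul_le_mul_of_nonneg_right _ (pow_nonneg hr0 _)
    apply pow_le_pow_left₀ (Nat.cast_nonneg n)
    linarith
  have step2 : ∑ n ∈ Finset.range M, w n * q n ≤ ∑ n ∈ Finset.range (M+1), w n * q n := by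
    rw [Finset.sum_range_succ]
    have : 0 ≤ w M * q M := mul_nonneg (hw0 M) (hq M)
    linarith
  have step3 := abel_sum w q M
  have step4 : ∑ n ∈ Finset.range M, (w n - w (n+1)) * (∑ m ∈ Finset.range (n+1), q m)
        + w M * (∑ m ∈ Finset.range (M+1), q m)
      ≤ ∑ n ∈ Finset.range M,
          ((2/ν) * (r^(2*n) * (2*((n:ℝ)+1)^2 + 8*ν^2))) * (C₁ + ε₂ * ((n:ℝ)+1) ^ β')
        + (r^(2*M) * (2*((M:ℝ)+1)^2 + 8*ν^2)) * (C₁ + ε₂ * ((M:ℝ)+1) ^ β') := by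
    have hbd : ∀ n : ℕ, (w n - w (n+1)) * (∑ m ∈ Finset.range (n+1), q m)
        ≤ ((2/ν) * (r^(2*n) * (2*((n:ℝ)+1)^2 + 8*ν^2))) * (C₁ + ε₂ * ((n:ℝ)+1) ^ β') := by
      intro n
      have h1 : 0 ≤ w n - w (n+1) := by linarith [hwmono n]
      have h2 : (0:ℝ) ≤ ∑ m ∈ Finset.range (n+1), q m :=
        Finset.sum_nonneg (fun m _ => hq m)
      calc (w n - w (n+1)) * (∑ m ∈ Finset.range (n+1), q m)
          ≤ (w n - w (n+1)) * (C₁ + ε₂ * ((n:ℝ)+1) ^ β') :=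
            mul_le_mul_of_nonneg_left (hQ' n) h1
        _ ≤ ((2/ν) * (r^(2*n) * (2*((n:ℝ)+1)^2 + 8*ν^2))) * (C₁ + ε₂ * ((n:ℝ)+1) ^ β') :=
            mul_le_mul_of_nonneg_right (hwdiff n) (hQpos _ (by positivity))
    have hbd2 : w M * (∑ m ∈ Finset.range (M+1), q m)
        ≤ (r^(2*M) * (2*((M:ℝ)+1)^2 + 8*ν^2)) * (C₁ + ε₂ * ((M:ℝ)+1) ^ β') := by
      have hwM : w M ≤ r^(2*M) * (2*((M:ℝ)+1)^2 + 8*ν^2) := by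
        have e4 : ((M:ℝ)+2*ν)^2 ≤ 2*((M:ℝ)+1)^2 + 8*ν^2 := by
          nlinarith [sq_nonneg ((M:ℝ) - 2*ν + 1)]
        calc w M = ((M:ℝ)+2*ν)^2 * r^(2*M) := rfl
          _ ≤ (2*((M:ℝ)+1)^2 + 8*ν^2) * r^(2*M) :=
              mul_le_mul_of_nonneg_right e4 (pow_nonneg hr0 _)
          _ = r^(2*M) * (2*((M:ℝ)+1)^2 + 8*ν^2) := by ring
      calc w M * (∑ m ∈ Finset.range (M+1), q m)
          ≤ w M * (C₁ + ε₂ * ((M:ℝ)+1) ^ β') := mul_le_mul_of_nonneg_left (hQ' M) (hw0 M)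
        _ ≤ (r^(2*M) * (2*((M:ℝ)+1)^2 + 8*ν^2)) * (C₁ + ε₂ * ((M:ℝ)+1) ^ β') :=
            mul_le_mul_of_nonneg_right hwM (hQpos _ (by positivity))
    have := Finset.sum_le_sum (fun n (_ : n ∈ Finset.range M) => hbd n)
    linarith
  -- expand the pointwise products into the four basic sums
  have expand : ∀ n : ℕ,
      ((2/ν) * (r^(2*n) * (2*((n:ℝ)+1)^2 + 8*ν^2))) * (C₁ + ε₂ * ((n:ℝ)+1) ^ β')
      = (2/ν) * (2*C₁*(((n:ℝ)+1) ^ ((2:ℝ)) * r^(2*n)) + 8*C₁*ν^2*(r^(2*n))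
          + 2*ε₂*(((n:ℝ)+1) ^ ((2:ℝ)+β') * r^(2*n)) + 8*ε₂*ν^2*(((n:ℝ)+1) ^ β' * r^(2*n))) := by
    intro n
    have hx : (0:ℝ) < (n:ℝ)+1 := by positivity
    rw [hpow2 _ hx.le, ← hsplitn _ hx]
    ring
  have expandM :
      (r^(2*M) * (2*((M:ℝ)+1)^2 + 8*ν^2)) * (C₁ + ε₂ * ((M:ℝ)+1) ^ β')
      = 2*C₁*(((M:ℝ)+1) ^ ((2:ℝ)) * r^(2*M)) + 8*C₁*ν^2*(r^(2*M))
          + 2*ε₂*(((M:ℝ)+1) ^ ((2:ℝ)+β') * r^(2*M)) + 8*ε₂*ν^2*(((M:ℝ)+1) ^ β' * r^(2*M)) := by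
    have hx : (0:ℝ) < (M:ℝ)+1 := by positivity
    rw [hpow2 _ hx.le, ← hsplitn _ hx]
    ring
  have step5 : ∑ n ∈ Finset.range M,
        ((2/ν) * (r^(2*n) * (2*((n:ℝ)+1)^2 + 8*ν^2))) * (C₁ + ε₂ * ((n:ℝ)+1) ^ β')
      = (2/ν) * (2*C₁*(∑ n ∈ Finset.range M, ((n:ℝ)+1) ^ ((2:ℝ)) * r^(2*n))
          + 8*C₁*ν^2*(∑ n ∈ Finset.range M, r^(2*n))
          + 2*ε₂*(∑ n ∈ Finset.range M, ((n:ℝ)+1) ^ ((2:ℝ)+β') * r^(2*n))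
          + 8*ε₂*ν^2*(∑ n ∈ Finset.range M, ((n:ℝ)+1) ^ β' * r^(2*n))) := by
    rw [Finset.sum_congr rfl (fun n _ => expand n)]
    rw [← Finset.mul_sum]
    congr 1
    rw [Finset.mul_sum, Finset.mul_sum, Finset.mul_sum, Finset.mul_sum]
    rw [← Finset.sum_add_distrib, ← Finset.sum_add_distrib, ← Finset.sum_add_distrib]
  -- final numeric assembly
  have hfinal : (2/ν) * (2*C₁*(2*((2:ℝ)*ν)^((2:ℝ))*ν) + 8*C₁*ν^2*ν
          + 2*ε₂*(2*(((2:ℝ)+β')*ν)^((2:ℝ)+β')*ν) + 8*ε₂*ν^2*(2*(β'*ν)^β'*ν))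
        + (2*C₁*(2*((2:ℝ)*ν)^((2:ℝ))) + 8*C₁*ν^2
          + 2*ε₂*(2*(((2:ℝ)+β')*ν)^((2:ℝ)+β')) + 8*ε₂*ν^2*(2*(β'*ν)^β'))
      ≤ 72*C₁*ν^2 + ε₂ * (12*(2+β')^(2+β') + 48*β'^β') * ν^((2:ℝ)+β') := by
    have h4 : ((2:ℝ)*ν)^((2:ℝ)) = 4*ν^2 := by
      rw [hpow2 _ (by positivity)]
      ring
    have hPmul : (((2:ℝ)+β')*ν)^((2:ℝ)+β') = (2+β')^((2:ℝ)+β') * ν^((2:ℝ)+β') :=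
      Real.mul_rpow (by linarith) hν0.le
    have hQmul : (β'*ν)^β' = β'^β' * ν^β' :=
      Real.mul_rpow hb.le hν0.le
    have hZ : ν^(2:ℕ) * ν^β' = ν^((2:ℝ)+β') := hsplitn ν hν0
    rw [h4, hPmul, hQmul, ← hZ]
    rw [← mul_le_mul_iff_of_pos_right hν0]
    have hνne : ν ≠ 0 := ne_of_gt hν0
    field_simp
    ring_nf
    apply le_of_eq
    ring
  calc ∑ n ∈ Finset.range M, (n:ℝ)^2 * r^(2*n) * q n
      ≤ ∑ n ∈ Finset.range (M+1), w n * q n := le_trans step1 step2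
    _ = _ := step3
    _ ≤ ∑ n ∈ Finset.range M,
          ((2/ν) * (r^(2*n) * (2*((n:ℝ)+1)^2 + 8*ν^2))) * (C₁ + ε₂ * ((n:ℝ)+1) ^ β')
        + (r^(2*M) * (2*((M:ℝ)+1)^2 + 8*ν^2)) * (C₁ + ε₂ * ((M:ℝ)+1) ^ β') := step4
    _ ≤ (2/ν) * (2*C₁*(2*((2:ℝ)*ν)^((2:ℝ))*ν) + 8*C₁*ν^2*ν
          + 2*ε₂*(2*(((2:ℝ)+β')*ν)^((2:ℝ)+β')*ν) + 8*ε₂*ν^2*(2*(β'*ν)^β'*ν))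
        + (2*C₁*(2*((2:ℝ)*ν)^((2:ℝ))) + 8*C₁*ν^2
          + 2*ε₂*(2*(((2:ℝ)+β')*ν)^((2:ℝ)+β')) + 8*ε₂*ν^2*(2*(β'*ν)^β')) := by
        rw [step5, expandM]
        have h2ν : (0:ℝ) ≤ 2/ν := by positivity
        have hc1 : (0:ℝ) ≤ 2*C₁ := by linarith
        have hc2 : (0:ℝ) ≤ 8*C₁*ν^2 := by positivity
        have hc3 : (0:ℝ) ≤ 2*ε₂ := by linarith
        have hc4 : (0:ℝ) ≤ 8*ε₂*ν^2 := by positivity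
        have i1 := mul_le_mul_of_nonneg_left hS2 hc1
        have i2 := mul_le_mul_of_nonneg_left hS0 hc2
        have i3 := mul_le_mul_of_nonneg_left hS2b hc3
        have i4 := mul_le_mul_of_nonneg_left hSb hc4
        have part1 := mul_le_mul_of_nonneg_left
          (by linarith : 2 * C₁ * ∑ n ∈ Finset.range M, ((n:ℝ) + 1) ^ ((2:ℝ)) * r ^ (2 * n)
              + 8 * C₁ * ν ^ 2 * ∑ n ∈ Finset.range M, r ^ (2 * n)
              + 2 * ε₂ * ∑ n ∈ Finset.range M, ((n:ℝ) + 1) ^ ((2:ℝ) + β') * r ^ (2 * n)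
              + 8 * ε₂ * ν ^ 2 * ∑ n ∈ Finset.range M, ((n:ℝ) + 1) ^ β' * r ^ (2 * n)
            ≤ 2*C₁*(2*((2:ℝ)*ν)^((2:ℝ))*ν) + 8*C₁*ν^2*ν
              + 2*ε₂*(2*(((2:ℝ)+β')*ν)^((2:ℝ)+β')*ν) + 8*ε₂*ν^2*(2*(β'*ν)^β'*ν)) h2ν
        have j1 := mul_le_mul_of_nonneg_left hP2 hc1
        have j2 := mul_le_mul_of_nonneg_left hP0 hc2
        have j3 := mul_le_mul_of_nonneg_left hP2b hc3
        have j4 := mul_le_mul_of_nonneg_left hPb hc4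
        linarith
    _ ≤ 72*C₁*ν^2 + ε₂ * (12*(2+β')^(2+β') + 48*β'^β') * ν^((2:ℝ)+β') := hfinal
    _ = 72*C₁*ν^2 + ε₂ * (12*(2+β')^(2+β') + 48*β'^β') * ν^(2+β') := by norm_num

set_option maxHeartbeats 2000000 in
theorem stmt5 (β α : ℝ) (hβ0 : 0 < β) (hβ1 : β ≤ 1 / 2)
    (hα0 : 0 ≤ α) (hα1 : α ≤ β / 2)
    (A B : Set ℕ) (hA : A.Infinite) (hB : B.Infinite)
    (h1 : (fun i : ℕ => (Nat.nth (· ∈ A) i : ℝ) - (Nat.nth (· ∈ B) i : ℝ))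
      =o[atTop] fun i : ℕ => (Nat.nth (· ∈ A) i : ℝ) ^ (β - α))
    (h2 : (fun n : ℕ => (countFn A n : ℝ) - (countFn B n : ℝ))
      =O[atTop] fun n : ℕ => (n : ℝ) ^ α)
    (h3 : ∃ c : ℝ, 0 < c ∧ ∀ n : ℕ,
      (countFn A n : ℝ) ≤ c * (n : ℝ) ^ β ∧ (countFn B n : ℝ) ≤ c * (n : ℝ) ^ β) :
    (fun N : ℕ => ∑' n : ℕ, (1 - 1 / (N : ℝ)) ^ (2 * n) * (sumFn A n - sumFn B n) ^ 2)
      =o[atTop] fun N : ℕ => (N : ℝ) ^ (2 + 2 * β) := by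
  obtain ⟨c, hc, h3'⟩ := h3
  have hs4 : 0 < 4*β - 2*α := by linarith
  have hKW0 : (0:ℝ) < 12*(2+2*β)^(2+2*β) + 48*(2*β)^(2*β) := by positivity
  have hsT0 : (0:ℝ) < (4*β - 2*α)^(4*β - 2*α) := Real.rpow_pos_of_pos hs4 _
  set KW : ℝ := 12*(2+2*β)^(2+2*β) + 48*(2*β)^(2*β) with hKWdef
  set sT : ℝ := (4*β - 2*α)^(4*β - 2*α) with hsTdef
  rw [isLittleO_iff]
  intro ε hε
  set ε₁ : ℝ := min 1 (ε/(32*sT + 32)) with hε₁def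
  have hε₁pos : 0 < ε₁ := lt_min one_pos (by positivity)
  set ε₂ : ℝ := ε/(8*KW + 8) with hε₂def
  have hε₂pos : 0 < ε₂ := by positivity
  obtain ⟨C₀, hC₀0, hS1⟩ := sum1 β α hβ0 hβ1 hα0 hα1 A B hA hB h1 c hc h3' ε₁ hε₁pos
  obtain ⟨C₁, hC₁0, hS2⟩ := sum2 β α hβ0 hα0 hα1 _ h2
    (fun ε' hε' => sum1 β α hβ0 hβ1 hα0 hα1 A B hA hB h1 c hc h3' ε' hε') ε₂ hε₂pos
  -- bounds on coefficients
  have hcoef1 : 2 * ε₂ * KW ≤ ε / 4 := by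
    have hd : (0:ℝ) < 8*KW + 8 := by positivity
    have e : 2 * ε₂ * KW = (2*ε*KW) / (8*KW + 8) := by rw [hε₂def]; ring
    rw [e, div_le_iff₀ hd]
    nlinarith [mul_pos hε hKW0]
  have hcoef2 : 8 * ε₁^2 * sT ≤ ε / 4 := by
    have h1' : ε₁ ≤ 1 := min_le_left _ _
    have h2' : ε₁ ≤ ε/(32*sT + 32) := min_le_right _ _
    have h3'' : ε₁^2 ≤ ε/(32*sT + 32) := by nlinarith
    rw [le_div_iff₀ (by positivity : (0:ℝ) < 32*sT + 32)] at h3''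
    nlinarith [sq_nonneg ε₁, hsT0.le]
  -- eventual bound for lower-order terms
  have ev : ∀ᶠ N : ℕ in atTop, (2/ε) * (144*C₁ + 4*C₀^2) ≤ (N:ℝ)^(2*β) :=
    (nat_rpow_tendsto _ (by linarith)).eventually_ge_atTop _
  filter_upwards [ev, eventually_ge_atTop 2] with N hevN hN2
  have hν2 : (2:ℝ) ≤ (N:ℝ) := by exact_mod_cast hN2
  have hν0 : (0:ℝ) < (N:ℝ) := by linarith
  have hν1 : (1:ℝ) ≤ (N:ℝ) := by linarith
  have hr0 : (0:ℝ) ≤ 1 - 1/(N:ℝ) := r_nonneg hN2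
  have hf0 : ∀ n : ℕ, 0 ≤ (1 - 1/(N:ℝ))^(2*n) * (sumFn A n - sumFn B n)^2 :=
    fun n => mul_nonneg (pow_nonneg hr0 _) (sq_nonneg _)
  -- identity D n = n * dC n - T n
  have hD : ∀ n : ℕ, sumFn A n - sumFn B n
      = (n:ℝ) * ((countFn A n : ℝ) - countFn B n)
        - ∑ m ∈ Finset.range n, ((countFn A m : ℝ) - countFn B m) := by
    intro n
    rw [sumFn_identity A n, sumFn_identity B n, Finset.sum_sub_distrib]
    ring
  have hT : ∀ n : ℕ, |∑ m ∈ Finset.range n, ((countFn A m:ℝ) - countFn B m)|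
      ≤ C₀ + ε₁ * (n:ℝ)^(2*β - α) :=
    fun n => le_trans (Finset.abs_sum_le_sum_abs _ _) (hS1 n)
  have hz : ∀ n : ℕ, ((n:ℝ)^(2*β - α))^(2:ℕ) = (n:ℝ)^(4*β - 2*α) := by
    intro n
    rw [← Real.rpow_natCast ((n:ℝ)^(2*β-α)) 2, ← Real.rpow_mul (Nat.cast_nonneg n)]
    norm_num
    rw [show (2*β-α)*2 = 4*β-2*α by ring]
  have hz2 : ∀ n : ℕ, (n:ℝ)^(4*β - 2*α) ≤ ((n:ℝ)+1)^(4*β - 2*α) := by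
    intro n
    exact Real.rpow_le_rpow (Nat.cast_nonneg n) (by linarith) hs4.le
  have hD2 : ∀ n : ℕ, (1 - 1/(N:ℝ))^(2*n) * (sumFn A n - sumFn B n)^2
      ≤ 2*((n:ℝ)^2 * (1 - 1/(N:ℝ))^(2*n) * ((countFn A n:ℝ) - countFn B n)^2)
        + (4*C₀^2) * (1 - 1/(N:ℝ))^(2*n)
        + (4*ε₁^2) * (((n:ℝ)+1)^(4*β-2*α) * (1 - 1/(N:ℝ))^(2*n)) := by
    intro n
    have hx := hD n
    set x := (n:ℝ) * ((countFn A n : ℝ) - countFn B n) with hxdef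
    set y := ∑ m ∈ Finset.range n, ((countFn A m:ℝ) - countFn B m) with hydef
    have hzn : (0:ℝ) ≤ (n:ℝ)^(2*β-α) := Real.rpow_nonneg (Nat.cast_nonneg n) _
    have hb1 : (x - y)^2 ≤ 2*x^2 + 2*y^2 := by nlinarith [sq_nonneg (x + y)]
    have hb2 : y^2 ≤ (C₀ + ε₁*(n:ℝ)^(2*β-α))^2 := by
      have h := hT n
      nlinarith [abs_nonneg y, sq_abs y]
    have hb3 : (C₀ + ε₁*(n:ℝ)^(2*β-α))^2 ≤ 2*C₀^2 + 2*ε₁^2*((n:ℝ)^(2*β-α))^2 := by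
      nlinarith [sq_nonneg (C₀ - ε₁*(n:ℝ)^(2*β-α))]
    have hb4 : ((n:ℝ)^(2*β-α))^(2:ℕ) ≤ ((n:ℝ)+1)^(4*β-2*α) := (hz n) ▸ hz2 n
    have hD2' : (sumFn A n - sumFn B n)^2
        ≤ 2*((n:ℝ)^2*((countFn A n:ℝ) - countFn B n)^2) + 4*C₀^2
          + 4*ε₁^2*(((n:ℝ)+1)^(4*β-2*α)) := by
      rw [hx]
      have : x^2 = (n:ℝ)^2*((countFn A n:ℝ) - countFn B n)^2 := by rw [hxdef]; ring
      nlinarith [sq_nonneg ε₁]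
    have hrn : (0:ℝ) ≤ (1 - 1/(N:ℝ))^(2*n) := pow_nonneg hr0 _
    calc (1 - 1/(N:ℝ))^(2*n) * (sumFn A n - sumFn B n)^2
        ≤ (1 - 1/(N:ℝ))^(2*n) * (2*((n:ℝ)^2*((countFn A n:ℝ) - countFn B n)^2) + 4*C₀^2
            + 4*ε₁^2*(((n:ℝ)+1)^(4*β-2*α))) := mul_le_mul_of_nonneg_left hD2' hrn
      _ = 2*((n:ℝ)^2 * (1 - 1/(N:ℝ))^(2*n) * ((countFn A n:ℝ) - countFn B n)^2)
          + (4*C₀^2) * (1 - 1/(N:ℝ))^(2*n)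
          + (4*ε₁^2) * (((n:ℝ)+1)^(4*β-2*α) * (1 - 1/(N:ℝ))^(2*n)) := by ring
  -- per-M bound
  have key : ∀ M : ℕ, ∑ n ∈ Finset.range M,
      (1 - 1/(N:ℝ))^(2*n) * (sumFn A n - sumFn B n)^2 ≤ ε * (N:ℝ)^(2+2*β) := by
    intro M
    have hW := weighted_sum_bound (2*β) (by linarith)
      (fun n => ((countFn A n:ℝ) - countFn B n)^2) (fun n => sq_nonneg _)
      C₁ ε₂ hC₁0 hε₂pos.le hS2 N hN2 M
    have hG0 := geo_sum_const hN2 (M := M)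
    have hG4 := geo_sum hN2 hs4 M
    have hsum : ∑ n ∈ Finset.range M, (1 - 1/(N:ℝ))^(2*n) * (sumFn A n - sumFn B n)^2
        ≤ 2*(∑ n ∈ Finset.range M,
              (n:ℝ)^2 * (1 - 1/(N:ℝ))^(2*n) * ((countFn A n:ℝ) - countFn B n)^2)
          + (4*C₀^2) * (∑ n ∈ Finset.range M, (1 - 1/(N:ℝ))^(2*n))
          + (4*ε₁^2) * (∑ n ∈ Finset.range M, ((n:ℝ)+1)^(4*β-2*α) * (1 - 1/(N:ℝ))^(2*n)) := by
      rw [Finset.mul_sum, Finset.mul_sum, Finset.mul_sum,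
        ← Finset.sum_add_distrib, ← Finset.sum_add_distrib]
      exact Finset.sum_le_sum (fun n _ => hD2 n)
    -- assemble
    have hq0 : (0:ℝ) ≤ 4*C₀^2 := by positivity
    have hq1 : (0:ℝ) ≤ 4*ε₁^2 := by positivity
    have i1 := mul_le_mul_of_nonneg_left hW (by norm_num : (0:ℝ) ≤ 2)
    have i2 := mul_le_mul_of_nonneg_left hG0 hq0
    have i3 := mul_le_mul_of_nonneg_left hG4 hq1
    -- rpow arithmetic
    have hZsplit : ((N:ℝ))^(2:ℕ) * (N:ℝ)^(2*β) = (N:ℝ)^(2+2*β) := by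
      rw [← Real.rpow_natCast ((N:ℝ)) 2, ← Real.rpow_add hν0]
      norm_num
    have hTgeo : 2 * ((4*β-2*α) * (N:ℝ)) ^ (4*β-2*α) * (N:ℝ)
        ≤ 2 * sT * (N:ℝ)^(2+2*β) := by
      rw [Real.mul_rpow hs4.le hν0.le, ← hsTdef]
      have e1 : (N:ℝ)^(4*β-2*α) * (N:ℝ) ≤ (N:ℝ)^(2+2*β) := by
        rw [show ((N:ℝ)^(4*β-2*α) * (N:ℝ) : ℝ) = (N:ℝ)^(4*β-2*α) * (N:ℝ)^((1:ℝ)) by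
          rw [Real.rpow_one], ← Real.rpow_add hν0]
        exact Real.rpow_le_rpow_of_exponent_le hν1 (by linarith)
      calc 2 * (sT * (N:ℝ)^(4*β-2*α)) * (N:ℝ) = 2*sT*((N:ℝ)^(4*β-2*α) * (N:ℝ)) := by ring
        _ ≤ 2*sT*((N:ℝ)^(2+2*β)) := by
            apply mul_le_mul_of_nonneg_left e1
            positivity
    have hlow : 144*C₁*((N:ℝ))^(2:ℕ) + 4*C₀^2*(N:ℝ) ≤ (ε/2) * (N:ℝ)^(2+2*β) := by
      have h144 : 144*C₁ + 4*C₀^2 ≤ (ε/2) * (N:ℝ)^(2*β) := by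
        have := mul_le_mul_of_nonneg_left hevN (le_of_lt (half_pos hε))
        calc (144*C₁ + 4*C₀^2 : ℝ) = (ε/2) * ((2/ε) * (144*C₁ + 4*C₀^2)) := by
              field_simp
          _ ≤ (ε/2) * (N:ℝ)^(2*β) := this
      have hNN : (N:ℝ) ≤ ((N:ℝ))^(2:ℕ) := by nlinarith
      have hsq0 : (0:ℝ) ≤ ((N:ℝ))^(2:ℕ) := by positivity
      calc 144*C₁*((N:ℝ))^(2:ℕ) + 4*C₀^2*(N:ℝ)
          ≤ (144*C₁ + 4*C₀^2) * ((N:ℝ))^(2:ℕ) := by nlinarith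
        _ ≤ ((ε/2) * (N:ℝ)^(2*β)) * ((N:ℝ))^(2:ℕ) :=
            mul_le_mul_of_nonneg_right h144 hsq0
        _ = (ε/2) * (N:ℝ)^(2+2*β) := by rw [← hZsplit]; ring
    have hg2 : (0:ℝ) ≤ (N:ℝ)^(2+2*β) := Real.rpow_nonneg hν0.le _
    have hc1' := mul_le_mul_of_nonneg_right hcoef1 hg2
    have hc2' := mul_le_mul_of_nonneg_right hcoef2 hg2
    have i3' : (4*ε₁^2) * (2 * ((4*β-2*α) * (N:ℝ)) ^ (4*β-2*α) * (N:ℝ))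
        ≤ (4*ε₁^2) * (2 * sT * (N:ℝ)^(2+2*β)) :=
      mul_le_mul_of_nonneg_left hTgeo hq1
    nlinarith [hsum, i1, i2, i3, i3', hc1', hc2', hlow]
  have htsum := Real.tsum_le_of_sum_range_le hf0 key
  rw [Real.norm_eq_abs, Real.norm_eq_abs, abs_of_nonneg (tsum_nonneg hf0),
    abs_of_nonneg (Real.rpow_nonneg hν0.le _)]
  exact htsum
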